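/- Under the assumptions of the GLA posterior formula (conditional independence of f_ft(X) and f_zs(X) given Y, label shift, exponential-family posteriors, class-balanced target), the classifier f_gla = f_ft + f_zs − π_s − π_p satisfies R_t(f_gla) ≤ R_t(g(f_zs, f_ft)) for every function g: ℝ^K × ℝ^K → ℝ^K; in particular R_t(f_gla) ≤ R_t(f_ft) and R_t(f_gla) ≤ R_t(f_ft + f_zs). -/

import Mathlib

open Finset

private lemma gla_aux (k Se Sz Te Tz Ee Ez a b : ℝ)
    (hTe : Te ≠ 0) (hTz : Tz ≠ 0) (ha : a ≠ 0) (hb : b ≠ 0) :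
    k * (Se * (Ee / Te) / a * (Sz * (Ez / Tz) / b)) =
      k * (Se * Sz / (Te * Tz)) * (Ee * Ez / (a * b)) := by
  field_simp

/-- Under the assumptions of the GLA posterior formula (conditional
independence of the two scores given the label, label shift, softmax
posteriors, class-balanced target), the GLA classifier
`argmax_y (f_ft + f_zs − π_s − π_p)_y` has target 0-1 risk no larger than the
classifier derived from any ensembling function `g` of the two scores; in
particular no larger than the fine-tuned classifier and the naive ensemble. -/
theorem gla_is_bayes_optimal_ensemble
    {E Z : Type*} [Fintype E] [Fintype Z] {K : ℕ} (hK : 0 < K)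
    (vece : E → Fin K → ℝ) (vecz : Z → Fin K → ℝ)
    (Pt : E → Z → Fin K → ℝ)
    (Ps : E → Fin K → ℝ) (Pp : Z → Fin K → ℝ)
    (hPt : ∀ e z y, 0 ≤ Pt e z y) (hPs : ∀ e y, 0 ≤ Ps e y) (hPp : ∀ z y, 0 ≤ Pp z y)
    (hPtsum : ∑ e, ∑ z, ∑ y, Pt e z y = 1)
    (hPssum : ∑ e, ∑ y, Ps e y = 1) (hPpsum : ∑ z, ∑ y, Pp z y = 1)
    (PtY PsY PpY : Fin K → ℝ)
    (hPtY : ∀ y, PtY y = ∑ e, ∑ z, Pt e z y)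
    (hPsY : ∀ y, PsY y = ∑ e, Ps e y)
    (hPpY : ∀ y, PpY y = ∑ z, Pp z y)
    (hPtYpos : ∀ y, 0 < PtY y) (hPsYpos : ∀ y, 0 < PsY y) (hPpYpos : ∀ y, 0 < PpY y)
    (hPtEZpos : ∀ e z, 0 < ∑ y, Pt e z y)
    -- conditional independence given y under P_t
    (hindep : ∀ e z y,
      Pt e z y / PtY y = ((∑ z', Pt e z' y) / PtY y) * ((∑ e', Pt e' z y) / PtY y))
    -- label shift
    (hshiftE : ∀ e y, (∑ z', Pt e z' y) / PtY y = Ps e y / PsY y)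
    (hshiftZ : ∀ z y, (∑ e', Pt e' z y) / PtY y = Pp z y / PpY y)
    -- softmax posteriors
    (hfts : ∀ e y, Ps e y / (∑ y', Ps e y') =
      Real.exp (vece e y) / ∑ i, Real.exp (vece e i))
    (hzs : ∀ z y, Pp z y / (∑ y', Pp z y') =
      Real.exp (vecz z y) / ∑ i, Real.exp (vecz z i))
    -- class-balanced target distribution
    (hbal : ∀ y, PtY y = 1 / K)
    -- log priors
    (piS piP : Fin K → ℝ)
    (hpiS : ∀ y, piS y = Real.log (PsY y)) (hpiP : ∀ y, piP y = Real.log (PpY y))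
    -- the GLA classifier: argmax of f_ft + f_zs − π_s − π_p
    (cgla : E → Z → Fin K)
    (hcgla : ∀ e z y, vece e y + vecz z y - piS y - piP y ≤
      vece e (cgla e z) + vecz z (cgla e z) - piS (cgla e z) - piP (cgla e z))
    -- an arbitrary ensembling function g of the two scores and its classifier
    (g : (Fin K → ℝ) → (Fin K → ℝ) → (Fin K → ℝ))
    (cg : E → Z → Fin K)
    (hcg : ∀ e z y, g (vecz z) (vece e) y ≤ g (vecz z) (vece e) (cg e z))
    -- the fine-tuned classifier: argmax of f_ft
    (cft : E → Z → Fin K)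
    (hcft : ∀ e z y, vece e y ≤ vece e (cft e z))
    -- the naive ensemble classifier: argmax of f_ft + f_zs
    (cens : E → Z → Fin K)
    (hcens : ∀ e z y, vece e y + vecz z y ≤ vece e (cens e z) + vecz z (cens e z)) :
    ((∑ e, ∑ z, ∑ y ∈ univ.filter (fun y => y ≠ cgla e z), Pt e z y) ≤
      ∑ e, ∑ z, ∑ y ∈ univ.filter (fun y => y ≠ cg e z), Pt e z y) ∧
    ((∑ e, ∑ z, ∑ y ∈ univ.filter (fun y => y ≠ cgla e z), Pt e z y) ≤
      ∑ e, ∑ z, ∑ y ∈ univ.filter (fun y => y ≠ cft e z), Pt e z y) ∧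
    ((∑ e, ∑ z, ∑ y ∈ univ.filter (fun y => y ≠ cgla e z), Pt e z y) ≤
      ∑ e, ∑ z, ∑ y ∈ univ.filter (fun y => y ≠ cens e z), Pt e z y) := by
  have hne : Nonempty (Fin K) := ⟨⟨0, hK⟩⟩
  -- The posterior is a positive multiple of exp(GLA score)
  have key : ∀ e z (c : Fin K), Pt e z c ≤ Pt e z (cgla e z) := by
    intro e z c
    have hTe : 0 < ∑ i, Real.exp (vece e i) :=
      Finset.sum_pos (fun i _ => Real.exp_pos _) Finset.univ_nonempty
    have hTz : 0 < ∑ i, Real.exp (vecz z i) :=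
      Finset.sum_pos (fun i _ => Real.exp_pos _) Finset.univ_nonempty
    have hSe : 0 < ∑ y', Ps e y' := by
      rcases lt_or_eq_of_le (Finset.sum_nonneg fun y _ => hPs e y) with h | h
      · exact h
      · exfalso
        have h2 := hfts e c
        rw [← h, div_zero] at h2
        exact absurd h2.symm (ne_of_gt (div_pos (Real.exp_pos _) hTe))
    have hSz : 0 < ∑ y', Pp z y' := by
      rcases lt_or_eq_of_le (Finset.sum_nonneg fun y _ => hPp z y) with h | h
      · exact h
      · exfalso
        have h2 := hzs z c
        rw [← h, div_zero] at h2
        exact absurd h2.symm (ne_of_gt (div_pos (Real.exp_pos _) hTz))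
    have hPsEq : ∀ y, Ps e y =
        (∑ y', Ps e y') * (Real.exp (vece e y) / ∑ i, Real.exp (vece e i)) := by
      intro y
      have h2 := hfts e y
      field_simp at h2 ⊢
      linarith
    have hPpEq : ∀ y, Pp z y =
        (∑ y', Pp z y') * (Real.exp (vecz z y) / ∑ i, Real.exp (vecz z i)) := by
      intro y
      have h2 := hzs z y
      clear hPsEq
      field_simp at h2 ⊢
      linarith
    have hPtEq : ∀ y, Pt e z y = PtY y * ((Ps e y / PsY y) * (Pp z y / PpY y)) := by
      intro y
      have h := hindep e z y
      rw [hshiftE, hshiftZ] at h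
      have h2 := (div_eq_iff (hPtYpos y).ne').mp h
      linarith [h2]
    have hform : ∀ y, Pt e z y =
        ((1 / K) * ((∑ y', Ps e y') * (∑ y', Pp z y') /
          ((∑ i, Real.exp (vece e i)) * (∑ i, Real.exp (vecz z i))))) *
        Real.exp (vece e y + vecz z y - piS y - piP y) := by
      intro y
      have hexp : Real.exp (vece e y + vecz z y - piS y - piP y) =
          Real.exp (vece e y) * Real.exp (vecz z y) / (PsY y * PpY y) := by
        rw [hpiS, hpiP, Real.exp_sub, Real.exp_sub, Real.exp_add,
          Real.exp_log (hPsYpos y), Real.exp_log (hPpYpos y)]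
        ring
      rw [hPtEq y, hbal y, hPsEq y, hPpEq y, hexp]
      exact gla_aux _ _ _ _ _ _ _ _ _ hTe.ne' hTz.ne' (hPsYpos y).ne' (hPpYpos y).ne'
    rw [hform c, hform (cgla e z)]
    have hCpos : 0 ≤ (1 / (K:ℝ)) * ((∑ y', Ps e y') * (∑ y', Pp z y') /
        ((∑ i, Real.exp (vece e i)) * (∑ i, Real.exp (vecz z i)))) := by
      clear hPsEq hPpEq hform
      positivity
    exact mul_le_mul_of_nonneg_left (Real.exp_le_exp.mpr (hcgla e z c)) hCpos
  have risk : ∀ (c : E → Z → Fin K),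
      (∑ e, ∑ z, ∑ y ∈ univ.filter (fun y => y ≠ cgla e z), Pt e z y) ≤
      ∑ e, ∑ z, ∑ y ∈ univ.filter (fun y => y ≠ c e z), Pt e z y := by
    intro c
    refine Finset.sum_le_sum fun e _ => Finset.sum_le_sum fun z _ => ?_
    have h1 : ∀ (a : Fin K), ∑ y ∈ univ.filter (fun y => y ≠ a), Pt e z y =
        (∑ y, Pt e z y) - Pt e z a := by
      intro a
      rw [Finset.filter_ne', Finset.sum_erase_eq_sub (Finset.mem_univ a)]
    rw [h1, h1]
    linarith [key e z (c e z)]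
  exact ⟨risk cg, risk cft, risk cens⟩
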